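/- The function I(x₁,v₁,a₁,x₂,v₂,a₂) = (a₂v₁ − a₁v₂)²/(v₁³v₂³) is a common first integral of the diagonal prolongations Ỹ₁ = v₁∂/∂a₁ + v₂∂/∂a₂, Ỹ₂ = Σᵢ(vᵢ∂/∂vᵢ + 2aᵢ∂/∂aᵢ), Ỹ₃ = Σᵢ(vᵢ∂/∂xᵢ + aᵢ∂/∂vᵢ + (3/2)(aᵢ²/vᵢ)∂/∂aᵢ) on the open set where v₁v₂ ≠ 0; i.e., Ỹ₁I = Ỹ₂I = Ỹ₃I = 0. -/

import Mathlib

/-- `I = (a₂v₁ − a₁v₂)²/(v₁³v₂³)` is a common first integral of the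
diagonal prolongations `Ỹ₁, Ỹ₂, Ỹ₃` on `{v₁v₂ ≠ 0}`.  Coordinates on `ℝ⁶`:
`(p 0, p 1, p 2, p 3, p 4, p 5) = (x₁, v₁, a₁, x₂, v₂, a₂)`. -/
theorem schwarzian_diagonal_first_integral
    (I : (Fin 6 → ℝ) → ℝ)
    (hI : ∀ p, I p = (p 5 * p 1 - p 2 * p 4) ^ 2 / ((p 1) ^ 3 * (p 4) ^ 3)) :
    ∀ p : Fin 6 → ℝ, p 1 * p 4 ≠ 0 →
      fderiv ℝ I p ![0, 0, p 1, 0, 0, p 4] = 0 ∧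
      fderiv ℝ I p ![0, p 1, 2 * p 2, 0, p 4, 2 * p 5] = 0 ∧
      fderiv ℝ I p
        ![p 1, p 2, (3/2) * (p 2) ^ 2 / p 1, p 4, p 5, (3/2) * (p 5) ^ 2 / p 4] = 0 := by
  have hIe : I = fun p => (p 5 * p 1 - p 2 * p 4) ^ 2 / ((p 1) ^ 3 * (p 4) ^ 3) :=
    funext hI
  subst hIe
  intro p hp
  have h1 : p 1 ≠ 0 := fun h => hp (by rw [h]; ring)
  have h4 : p 4 ≠ 0 := fun h => hp (by rw [h]; ring)
  have e1 := hasFDerivAt_apply (𝕜 := ℝ) (1 : Fin 6) p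
  have e2 := hasFDerivAt_apply (𝕜 := ℝ) (2 : Fin 6) p
  have e4 := hasFDerivAt_apply (𝕜 := ℝ) (4 : Fin 6) p
  have e5 := hasFDerivAt_apply (𝕜 := ℝ) (5 : Fin 6) p
  have hD : (p 1 * p 1 * p 1) * (p 4 * p 4 * p 4) ≠ 0 := by positivity
  have hsub := (e5.mul e1).sub (e2.mul e4)
  have hden := (e1.mul e1 |>.mul e1).mul (e4.mul e4 |>.mul e4)
  have hinv := (hasFDerivAt_inv (𝕜 := ℝ) hD).comp p hden
  have hF := (hsub.mul hsub).mul hinv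
  simp only [Function.comp_def] at hF
  have hfun : (fun p : Fin 6 → ℝ => (p 5 * p 1 - p 2 * p 4) ^ 2 / ((p 1) ^ 3 * (p 4) ^ 3))
      = fun p : Fin 6 → ℝ => (p 5 * p 1 - p 2 * p 4) * (p 5 * p 1 - p 2 * p 4) *
        ((p 1 * p 1 * p 1) * (p 4 * p 4 * p 4))⁻¹ := by
    funext q; rw [← div_eq_mul_inv]; ring
  rw [hfun, HasFDerivAt.fderiv (f := fun p : Fin 6 → ℝ => (p 5 * p 1 - p 2 * p 4) * (p 5 * p 1 - p 2 * p 4) *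
      ((p 1 * p 1 * p 1) * (p 4 * p 4 * p 4))⁻¹) hF]
  have v5 : ∀ (a b c d e f : ℝ), ![a, b, c, d, e, f] (5 : Fin 6) = f := fun _ _ _ _ _ _ => rfl
  have v2 : ∀ (a b c d e f : ℝ), ![a, b, c, d, e, f] (2 : Fin 6) = c := fun _ _ _ _ _ _ => rfl
  have v4 : ∀ (a b c d e f : ℝ), ![a, b, c, d, e, f] (4 : Fin 6) = e := fun _ _ _ _ _ _ => rfl
  refine ⟨?_, ?_, ?_⟩ <;>
  · simp only [ContinuousLinearMap.sub_apply, ContinuousLinearMap.add_apply,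
      ContinuousLinearMap.smul_apply, ContinuousLinearMap.comp_apply,
      ContinuousLinearMap.coe_smul', Pi.smul_apply, ContinuousLinearMap.proj_apply,
      Matrix.cons_val_zero, Matrix.cons_val_one, Matrix.head_cons, Matrix.cons_val_fin_one,
      Matrix.cons_val', smul_eq_mul, v5, Pi.mul_apply, Pi.sub_apply, v2, v4, ContinuousLinearMap.toSpanSingleton_apply]
    show _ = (0 : ℝ)
    field_simp
    ring
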